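/- Let N ≥ 1, δ ≥ 0, and let x₁,…,x_N and y₁,…,y_N be real numbers with |y_n − x_n| ≤ δ for all n ≤ N. Then the discrepancy satisfies D_N(y₁,…,y_N) ≤ 2·D_N(x₁,…,x_N) + 2δ. -/

import Mathlib

open scoped Classical

/-- The discrepancy of the first `N` terms of the sequence `x`. -/
noncomputable def discrepancy (N : ℕ) (x : ℕ → ℝ) : ℝ :=
  ⨆ I : {p : ℝ × ℝ // 0 ≤ p.1 ∧ p.1 ≤ p.2 ∧ p.2 ≤ 1},
    |(((Finset.Icc 1 N).filter
        (fun n => Int.fract (x n) ∈ Set.Ico I.1.1 I.1.2)).card : ℝ) / N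
      - (I.1.2 - I.1.1)|

/-- Count of indices `n ∈ [1, N]` with fractional part in `[c, d)`. -/
noncomputable def discCnt (N : ℕ) (z : ℕ → ℝ) (c d : ℝ) : ℕ :=
  ((Finset.Icc 1 N).filter (fun n => Int.fract (z n) ∈ Set.Ico c d)).card

lemma discCnt_le (N : ℕ) (z : ℕ → ℝ) (c d : ℝ) : discCnt N z c d ≤ N := by
  have := Finset.card_le_card
    (Finset.filter_subset (fun n => Int.fract (z n) ∈ Set.Ico c d) (Finset.Icc 1 N))
  simpa [discCnt, Nat.card_Icc] using this

lemma disc_bdd (N : ℕ) (hN : 1 ≤ N) (z : ℕ → ℝ) :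
    BddAbove (Set.range fun I : {p : ℝ × ℝ // 0 ≤ p.1 ∧ p.1 ≤ p.2 ∧ p.2 ≤ 1} =>
      |(((Finset.Icc 1 N).filter
        (fun n => Int.fract (z n) ∈ Set.Ico I.1.1 I.1.2)).card : ℝ) / N
      - (I.1.2 - I.1.1)|) := by
  refine ⟨1, ?_⟩
  rintro r ⟨I, rfl⟩
  obtain ⟨h1, h2, h3⟩ := I.2
  have hN0 : (0:ℝ) < N := by exact_mod_cast hN
  have hc : ((((Finset.Icc 1 N).filter
      (fun n => Int.fract (z n) ∈ Set.Ico I.1.1 I.1.2)).card : ℝ)) ≤ N := by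
    exact_mod_cast discCnt_le N z I.1.1 I.1.2
  have h4 : (0:ℝ) ≤ (((Finset.Icc 1 N).filter
      (fun n => Int.fract (z n) ∈ Set.Ico I.1.1 I.1.2)).card : ℝ) / N := by positivity
  have h5 : (((Finset.Icc 1 N).filter
      (fun n => Int.fract (z n) ∈ Set.Ico I.1.1 I.1.2)).card : ℝ) / N ≤ 1 := by
    rw [div_le_one hN0]; exact hc
  rw [abs_le]
  constructor <;> nlinarith

lemma disc_key (N : ℕ) (hN : 1 ≤ N) (z : ℕ → ℝ) {c d : ℝ}
    (h1 : 0 ≤ c) (h2 : c ≤ d) (h3 : d ≤ 1) :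
    |((discCnt N z c d : ℝ)) / N - (d - c)| ≤ discrepancy N z := by
  have := le_ciSup (disc_bdd N hN z) (⟨(c, d), h1, h2, h3⟩ :
    {p : ℝ × ℝ // 0 ≤ p.1 ∧ p.1 ≤ p.2 ∧ p.2 ≤ 1})
  simpa [discrepancy, discCnt] using this

lemma discCnt_mono_pt (N : ℕ) (z w : ℕ → ℝ) (a b c d : ℝ)
    (h : ∀ n, 1 ≤ n → n ≤ N → Int.fract (z n) ∈ Set.Ico a b →
      Int.fract (w n) ∈ Set.Ico c d) :
    discCnt N z a b ≤ discCnt N w c d := by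
  apply Finset.card_le_card
  intro n hn
  simp only [Finset.mem_filter, Finset.mem_Icc] at *
  exact ⟨hn.1, h n hn.1.1 hn.1.2 hn.2⟩

lemma discCnt_union (N : ℕ) (z w : ℕ → ℝ) (a b c1 d1 c2 d2 : ℝ)
    (h : ∀ n, 1 ≤ n → n ≤ N → Int.fract (z n) ∈ Set.Ico a b →
      Int.fract (w n) ∈ Set.Ico c1 d1 ∨ Int.fract (w n) ∈ Set.Ico c2 d2) :
    discCnt N z a b ≤ discCnt N w c1 d1 + discCnt N w c2 d2 := by
  calc discCnt N z a b
      ≤ (((Finset.Icc 1 N).filter (fun n => Int.fract (w n) ∈ Set.Ico c1 d1)) ∪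
        ((Finset.Icc 1 N).filter (fun n => Int.fract (w n) ∈ Set.Ico c2 d2))).card := by
        apply Finset.card_le_card
        intro n hn
        simp only [Finset.mem_filter, Finset.mem_union, Finset.mem_Icc, discCnt] at *
        rcases h n hn.1.1 hn.1.2 hn.2 with h' | h'
        · exact Or.inl ⟨hn.1, h'⟩
        · exact Or.inr ⟨hn.1, h'⟩
    _ ≤ _ := Finset.card_union_le _ _

lemma fract_shift (u v : ℝ) : Int.fract u = Int.fract (Int.fract v + (u - v)) := by
  have hv : Int.fract v = v - ↑⌊v⌋ := rfl
  have : Int.fract v + (u - v) = -↑⌊v⌋ + u := by rw [hv]; ring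
  rw [this, ← Int.cast_neg, Int.fract_intCast_add]

theorem discrepancy_perturbed (N : ℕ) (hN : 1 ≤ N) (δ : ℝ) (hδ : 0 ≤ δ)
    (x y : ℕ → ℝ) (h : ∀ n, 1 ≤ n → n ≤ N → |y n - x n| ≤ δ) :
    discrepancy N y ≤ 2 * discrepancy N x + 2 * δ := by
  have hN0 : (0:ℝ) < N := by exact_mod_cast hN
  set D := discrepancy N x with hDdef
  have hD : 0 ≤ D := le_trans (abs_nonneg _) (disc_key N hN x le_rfl le_rfl zero_le_one)
  have hrw : discrepancy N y = ⨆ I : {p : ℝ × ℝ // 0 ≤ p.1 ∧ p.1 ≤ p.2 ∧ p.2 ≤ 1},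
      |((discCnt N y I.1.1 I.1.2 : ℝ)) / N - (I.1.2 - I.1.1)| := rfl
  rw [hrw]
  have : Nonempty {p : ℝ × ℝ // 0 ≤ p.1 ∧ p.1 ≤ p.2 ∧ p.2 ≤ 1} :=
    ⟨⟨(0, 0), le_rfl, le_rfl, zero_le_one⟩⟩
  apply ciSup_le
  rintro ⟨⟨a, b⟩, ha, hab, hb⟩
  simp only
  rw [abs_le]
  have hcnt_nonneg : (0:ℝ) ≤ (discCnt N y a b : ℝ) / N := by positivity
  constructor
  · -- lower bound: -(2D + 2δ) ≤ cnt/N - (b - a)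
    by_cases hba : b - a ≤ 2 * δ
    · nlinarith
    · push_neg at hba
      have hsub : discCnt N x (a + δ) (b - δ) ≤ discCnt N y a b := by
        apply discCnt_mono_pt
        intro n h1 h2 hmem
        obtain ⟨hm1, hm2⟩ := hmem
        have habs := abs_le.mp (h n h1 h2)
        have hfy : Int.fract (y n) = Int.fract (Int.fract (x n) + (y n - x n)) :=
          fract_shift (y n) (x n)
        have hle : (0:ℝ) ≤ Int.fract (x n) + (y n - x n) := by linarith
        have hlt : Int.fract (x n) + (y n - x n) < 1 := by linarith
        rw [hfy, Int.fract_eq_self.mpr ⟨hle, hlt⟩]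
        exact ⟨by linarith, by linarith⟩
      have hkey := disc_key N hN x (c := a + δ) (d := b - δ)
        (by linarith) (by linarith) (by linarith)
      have hk := (abs_le.mp hkey).1
      have hdiv : (discCnt N x (a + δ) (b - δ) : ℝ) / N ≤ (discCnt N y a b : ℝ) / N := by
        gcongr
      simp only [← hDdef] at hk
      linarith
  · -- upper bound: cnt/N - (b - a) ≤ 2D + 2δ
    by_cases h1 : 1 ≤ b - a + 2 * δ
    · have hle1 : (discCnt N y a b : ℝ) / N ≤ 1 := by
        rw [div_le_one hN0]
        exact_mod_cast discCnt_le N y a b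
      linarith
    · push_neg at h1
      have hδ2 : 2 * δ < 1 := by linarith
      by_cases h2 : δ ≤ a
      · by_cases h3 : b + δ ≤ 1
        · -- single interval [a - δ, b + δ)
          have hsub : discCnt N y a b ≤ discCnt N x (a - δ) (b + δ) := by
            apply discCnt_mono_pt
            intro n hn1 hn2 hmem
            obtain ⟨hm1, hm2⟩ := hmem
            have habs := abs_le.mp (h n hn1 hn2)
            have hfx : Int.fract (x n) = Int.fract (Int.fract (y n) + (x n - y n)) :=
              fract_shift (x n) (y n)
            have hle : (0:ℝ) ≤ Int.fract (y n) + (x n - y n) := by linarith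
            have hlt : Int.fract (y n) + (x n - y n) < 1 := by linarith
            rw [hfx, Int.fract_eq_self.mpr ⟨hle, hlt⟩]
            exact ⟨by linarith, by linarith⟩
          have hkey := disc_key N hN x (c := a - δ) (d := b + δ)
            (by linarith) (by linarith) (by linarith)
          have hk := (abs_le.mp hkey).2
          have hdiv : (discCnt N y a b : ℝ) / N ≤ (discCnt N x (a - δ) (b + δ) : ℝ) / N := by
            gcongr
          simp only [← hDdef] at hk
          linarith
        · -- b + δ > 1 : intervals [a - δ, 1) and [0, b + δ - 1)
          push_neg at h3
          have hsub : discCnt N y a b ≤ discCnt N x (a - δ) 1 + discCnt N x 0 (b + δ - 1) := by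
            apply discCnt_union
            intro n hn1 hn2 hmem
            obtain ⟨hm1, hm2⟩ := hmem
            have habs := abs_le.mp (h n hn1 hn2)
            have hfx : Int.fract (x n) = Int.fract (Int.fract (y n) + (x n - y n)) :=
              fract_shift (x n) (y n)
            set t := Int.fract (y n) + (x n - y n) with ht
            by_cases htlt : t < 1
            · left
              have hle : (0:ℝ) ≤ t := by rw [ht]; linarith
              rw [hfx, Int.fract_eq_self.mpr ⟨hle, htlt⟩]
              exact ⟨by rw [ht]; linarith, htlt⟩
            · right
              push_neg at htlt
              have h2t : t < 2 := by rw [ht]; linarith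
              have : Int.fract (x n) = t - 1 := by
                rw [hfx, ← Int.fract_sub_one, Int.fract_eq_self.mpr ⟨by linarith, by linarith⟩]
              rw [this]
              exact ⟨by linarith, by rw [ht] at h2t ⊢; linarith [(abs_le.mp (h n hn1 hn2)).2]⟩
          have hkey1 := disc_key N hN x (c := a - δ) (d := 1)
            (by linarith) (by linarith) le_rfl
          have hkey2 := disc_key N hN x (c := 0) (d := b + δ - 1)
            le_rfl (by linarith) (by linarith)
          have hk1 := (abs_le.mp hkey1).2
          have hk2 := (abs_le.mp hkey2).2
          have hdiv : (discCnt N y a b : ℝ) / N ≤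
              (discCnt N x (a - δ) 1 : ℝ) / N + (discCnt N x 0 (b + δ - 1) : ℝ) / N := by
            rw [← add_div]
            gcongr
            exact_mod_cast hsub
          simp only [← hDdef] at hk1 hk2
          linarith
      · -- a < δ : intervals [0, b + δ) and [a - δ + 1, 1)
        push_neg at h2
        have hbd : b + δ < 1 := by linarith
        have hsub : discCnt N y a b ≤ discCnt N x 0 (b + δ) + discCnt N x (a - δ + 1) 1 := by
          apply discCnt_union
          intro n hn1 hn2 hmem
          obtain ⟨hm1, hm2⟩ := hmem
          have habs := abs_le.mp (h n hn1 hn2)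
          have hfx : Int.fract (x n) = Int.fract (Int.fract (y n) + (x n - y n)) :=
            fract_shift (x n) (y n)
          set t := Int.fract (y n) + (x n - y n) with ht
          by_cases htge : 0 ≤ t
          · left
            have hlt : t < 1 := by rw [ht]; linarith
            rw [hfx, Int.fract_eq_self.mpr ⟨htge, hlt⟩]
            exact ⟨htge, by rw [ht]; linarith⟩
          · right
            push_neg at htge
            have hm1' : -1 ≤ t := by rw [ht]; linarith
            have : Int.fract (x n) = t + 1 := by
              rw [hfx, ← Int.fract_add_one, Int.fract_eq_self.mpr ⟨by linarith, by linarith⟩]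
            rw [this]
            exact ⟨by rw [ht]; linarith, by linarith⟩
        have hkey1 := disc_key N hN x (c := 0) (d := b + δ)
          le_rfl (by linarith) (by linarith)
        have hkey2 := disc_key N hN x (c := a - δ + 1) (d := 1)
          (by linarith) (by linarith) le_rfl
        have hk1 := (abs_le.mp hkey1).2
        have hk2 := (abs_le.mp hkey2).2
        have hdiv : (discCnt N y a b : ℝ) / N ≤
            (discCnt N x 0 (b + δ) : ℝ) / N + (discCnt N x (a - δ + 1) 1 : ℝ) / N := by
          rw [← add_div]
          gcongr
          exact_mod_cast hsub
        simp only [← hDdef] at hk1 hk2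
        linarith
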